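/- Let m ≥ 1 and let a₁,…,a_m be distinct complex numbers in the open upper half-plane. Then there exists a unique vector (α₁,…,α_m) ∈ ℂ^m satisfying the Vandermonde system Σ_{j=1}^m α_j a_j^k = δ_{k,0} for k = 0, 1, …, m−1 (i.e. Σ α_j = 1 and Σ α_j a_j^k = 0 for 1 ≤ k ≤ m−1). Moreover, setting b_j = conj(a_j) and β_j = conj(α_j), the function K(x) = (1/(2πi))[ Σ_{j=1}^m α_j/(x−a_j) − Σ_{j=1}^m β_j/(x−b_j) ] is real-valued on ℝ and is an mth order kernel. -/

import Mathlib

open MeasureTheory Real Set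

/-- The rational kernel with poles `a j` in the upper half-plane and `b j` in the
lower half-plane, and residues `α j`, `β j`. -/
noncomputable def ratKernel {n₁ n₂ : ℕ} (a : Fin n₁ → ℂ) (b : Fin n₂ → ℂ)
    (α : Fin n₁ → ℂ) (β : Fin n₂ → ℂ) (x : ℝ) : ℂ :=
  (1 / (2 * Real.pi * Complex.I)) *
    (∑ j, α j / ((x : ℂ) - a j) - ∑ j, β j / ((x : ℂ) - b j))



section Aux
open Filter Finset

lemma denom_ne (a : ℂ) (ha : a.im ≠ 0) (x : ℝ) : (x:ℂ) - a ≠ 0 := by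
  intro h
  apply ha
  have := congrArg Complex.im h
  simpa using this.symm

lemma contS {n : ℕ} (a γ : Fin n → ℂ) (ha : ∀ j, (a j).im ≠ 0) :
    Continuous (fun x : ℝ => ∑ j, γ j / ((x:ℂ) - a j)) := by
  refine continuous_finset_sum _ fun j _ => ?_
  exact continuous_const.div (Complex.continuous_ofReal.sub continuous_const)
    (fun x => denom_ne (a j) (ha j) x)

lemma ratKernel_eq {n : ℕ} (a γ : Fin n → ℂ) (x : ℝ) :
    ratKernel a (fun j => starRingEnd ℂ (a j)) γ (fun j => starRingEnd ℂ (γ j)) x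
      = (((∑ j, γ j / ((x:ℂ) - a j)).im / π : ℝ) : ℂ) := by
  unfold ratKernel
  have h2 : ∑ j, starRingEnd ℂ (γ j) / ((x:ℂ) - starRingEnd ℂ (a j))
      = starRingEnd ℂ (∑ j, γ j / ((x:ℂ) - a j)) := by
    rw [map_sum]
    congr 1 with j
    rw [map_div₀, map_sub, Complex.conj_ofReal]
  rw [h2, Complex.sub_conj]
  have hpi : (π : ℂ) ≠ 0 := by exact_mod_cast Real.pi_ne_zero
  field_simp
  push_cast
  ring_nf
  rw [mul_assoc _ (π:ℂ), mul_inv_cancel₀ hpi, mul_one]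

lemma shift {n : ℕ} (m : ℕ) (a γ : Fin n → ℂ) (ha : ∀ j, (a j).im ≠ 0)
    (hmom : ∀ l, l < m → ∑ j, γ j * a j ^ l = if l = 0 then 1 else 0)
    (k : ℕ) (hk1 : 1 ≤ k) (hk : k ≤ m) (x : ℝ) :
    (x:ℂ)^k * (∑ j, γ j / ((x:ℂ) - a j))
      = (x:ℂ)^(k-1) + ∑ j, (γ j * a j ^ k) / ((x:ℂ) - a j) := by
  have hper : ∀ j, (x:ℂ)^k * (γ j / ((x:ℂ) - a j))
      = γ j * (∑ i ∈ range k, (x:ℂ)^i * (a j)^(k-1-i)) + (γ j * a j ^ k)/((x:ℂ) - a j) := by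
    intro j
    have hd := denom_ne (a j) (ha j) x
    have hg := geom_sum₂_mul (x:ℂ) (a j) k
    field_simp
    linear_combination (-(γ j)) * hg
  rw [Finset.mul_sum, Finset.sum_congr rfl (fun j _ => hper j), Finset.sum_add_distrib]
  congr 1
  simp_rw [Finset.mul_sum]
  rw [Finset.sum_comm]
  have hcol : ∀ i ∈ range k, (∑ j, γ j * ((x:ℂ)^i * a j^(k-1-i)))
      = if i = k-1 then (x:ℂ)^(k-1) else 0 := by
    intro i hi
    simp only [Finset.mem_range] at hi
    have h1 : ∑ j, γ j * ((x:ℂ)^i * a j^(k-1-i)) = (x:ℂ)^i * ∑ j, γ j * a j^(k-1-i) := by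
      rw [Finset.mul_sum]; congr 1 with j; ring
    rw [h1, hmom _ (by omega)]
    by_cases h : i = k-1
    · subst h
      rw [if_pos (by omega), if_pos rfl, mul_one]
    · rw [if_neg (by omega), if_neg h, mul_zero]
  rw [Finset.sum_congr rfl hcol, Finset.sum_ite_eq' (range k) (k-1)]
  rw [if_pos (Finset.mem_range.mpr (by omega))]

lemma expand {n : ℕ} (m : ℕ) (hm : 1 ≤ m) (a γ : Fin n → ℂ) (ha : ∀ j, (a j).im ≠ 0)
    (hmom : ∀ l, l < m → ∑ j, γ j * a j ^ l = if l = 0 then 1 else 0)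
    (x : ℝ) (hx : x ≠ 0) :
    (∑ j, γ j / ((x:ℂ) - a j)) - 1/(x:ℂ)
      = (∑ j, (γ j * a j ^ m) / ((x:ℂ) - a j)) / (x:ℂ)^m := by
  have hx0 : (x:ℂ) ≠ 0 := by exact_mod_cast hx
  have h := shift m a γ ha hmom m hm le_rfl x
  rw [eq_div_iff (pow_ne_zero m hx0)]
  have hp : (x:ℂ)^m = (x:ℂ) * (x:ℂ)^(m-1) := by
    rw [← pow_succ']; congr 1; omega
  have h2 : (1/(x:ℂ)) * (x:ℂ)^m = (x:ℂ)^(m-1) := by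
    rw [hp]; field_simp
  linear_combination h - h2

lemma tail {n : ℕ} (m : ℕ) (hm : 1 ≤ m) (a γ : Fin n → ℂ) (ha : ∀ j, (a j).im ≠ 0)
    (hmom : ∀ l, l < m → ∑ j, γ j * a j ^ l = if l = 0 then 1 else 0)
    (M : ℝ) (hM1 : 1 ≤ M) (hMa : ∀ j, ‖a j‖ ≤ M)
    (x : ℝ) (hx : 2*M + 1 ≤ |x|) :
    ‖(∑ j, γ j / ((x:ℂ) - a j)) - 1/(x:ℂ)‖
      ≤ ((∑ j, ‖γ j‖) * M^m * 2^(m+1)) / (1+|x|)^(m+1) := by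
  have h1x : (0:ℝ) < 1 + |x| := by positivity
  have hx1 : (1:ℝ) ≤ |x| := by linarith
  have hx0 : x ≠ 0 := by
    intro h; rw [h] at hx1; exact absurd hx1 (by norm_num)
  have hxC : ‖((x:ℝ):ℂ)‖ = |x| := by simp
  have hden : ∀ j, (1+|x|)/2 ≤ ‖(x:ℂ) - a j‖ := by
    intro j
    have h1 : ‖(x:ℂ)‖ - ‖a j‖ ≤ ‖(x:ℂ) - a j‖ := norm_sub_norm_le _ _
    rw [hxC] at h1
    have := hMa j
    linarith
  rw [expand m hm a γ ha hmom x hx0, norm_div, norm_pow, hxC]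
  have hT : ‖∑ j, (γ j * a j ^ m) / ((x:ℂ) - a j)‖
      ≤ (∑ j, ‖γ j‖) * (M^m * (2/(1+|x|))) := by
    calc ‖∑ j, (γ j * a j ^ m) / ((x:ℂ) - a j)‖ ≤ ∑ j, ‖(γ j * a j ^ m) / ((x:ℂ) - a j)‖ :=
          norm_sum_le _ _
      _ ≤ ∑ j, ‖γ j‖ * (M^m * (2/(1+|x|))) := by
          refine Finset.sum_le_sum fun j _ => ?_
          rw [norm_div, norm_mul, norm_pow, mul_div_assoc]
          refine mul_le_mul_of_nonneg_left ?_ (norm_nonneg _)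
          have h2 : ‖a j‖^m / ‖(x:ℂ) - a j‖ ≤ M^m / ((1+|x|)/2) := by
            apply div_le_div₀ (by positivity)
              (pow_le_pow_left₀ (norm_nonneg _) (hMa j) m) (by positivity) (hden j)
          calc ‖a j‖^m / ‖(x:ℂ) - a j‖ ≤ M^m / ((1+|x|)/2) := h2
            _ = M^m * (2/(1+|x|)) := by field_simp
      _ = (∑ j, ‖γ j‖) * (M^m * (2/(1+|x|))) := by rw [Finset.sum_mul]
  have hpow : ((1+|x|)/2)^m ≤ |x|^m := by
    apply pow_le_pow_left₀ (by positivity)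
    linarith
  have hfin : ((∑ j, ‖γ j‖) * (M^m * (2/(1+|x|)))) / (((1+|x|)/2)^m)
      = ((∑ j, ‖γ j‖) * M^m * 2^(m+1)) / (1+|x|)^(m+1) := by
    rw [div_pow, pow_succ]
    field_simp
    ring
  calc ‖∑ j, (γ j * a j ^ m) / ((x:ℂ) - a j)‖ / |x|^m
      ≤ ((∑ j, ‖γ j‖) * (M^m * (2/(1+|x|)))) / (((1+|x|)/2)^m) := by
        apply div_le_div₀ (by positivity) hT (by positivity) hpow
    _ = ((∑ j, ‖γ j‖) * M^m * 2^(m+1)) / (1+|x|)^(m+1) := hfin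

lemma ratio_tendsto_top (p q : ℝ) :
    Tendsto (fun x : ℝ => ((x-p)^2+q^2)/(x^2+1)) atTop (nhds 1) := by
  have hg : ContinuousAt (fun u : ℝ => ((1-p*u)^2+(q*u)^2)/(1+u^2)) 0 := by
    apply ContinuousAt.div (by fun_prop) (by fun_prop) (by norm_num)
  have h0 : Tendsto (fun x : ℝ => x⁻¹) atTop (nhds (0:ℝ)) := tendsto_inv_atTop_zero
  have hcomp := hg.tendsto.comp h0
  simp only [Function.comp_def] at hcomp
  norm_num at hcomp
  refine hcomp.congr' ?_
  filter_upwards [eventually_gt_atTop (0:ℝ)] with x hx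
  have hx0 : x ≠ 0 := ne_of_gt hx
  field_simp

lemma ratio_tendsto_bot (p q : ℝ) :
    Tendsto (fun x : ℝ => ((x-p)^2+q^2)/(x^2+1)) atBot (nhds 1) := by
  have hg : ContinuousAt (fun u : ℝ => ((1-p*u)^2+(q*u)^2)/(1+u^2)) 0 := by
    apply ContinuousAt.div (by fun_prop) (by fun_prop) (by norm_num)
  have h0 : Tendsto (fun x : ℝ => x⁻¹) atBot (nhds (0:ℝ)) := by
    have hneg : Tendsto (fun x : ℝ => -x) atBot atTop := tendsto_neg_atBot_atTop
    have h2 := (tendsto_inv_atTop_zero (𝕜 := ℝ)).comp hneg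
    simp only [Function.comp_def] at h2
    have h3 : Tendsto (fun x : ℝ => -(-x)⁻¹) atBot (nhds (0:ℝ)) := by simpa using h2.neg
    refine h3.congr fun x => by rw [inv_neg, neg_neg]
  have hcomp := hg.tendsto.comp h0
  simp only [Function.comp_def] at hcomp
  norm_num at hcomp
  refine hcomp.congr' ?_
  filter_upwards [eventually_lt_atBot (0:ℝ)] with x hx
  have hx0 : x ≠ 0 := ne_of_lt hx
  field_simp

lemma log_part_tendsto_top (p q : ℝ) (hq : q ≠ 0) :
    Tendsto (fun x : ℝ => (1/2) * (Real.log ((x-p)^2+q^2) - Real.log (x^2+1)))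
      atTop (nhds 0) := by
  have hpos : ∀ x : ℝ, (0:ℝ) < (x-p)^2+q^2 := fun x => by positivity
  have h1 : ∀ x : ℝ, Real.log ((x-p)^2+q^2) - Real.log (x^2+1)
      = Real.log (((x-p)^2+q^2)/(x^2+1)) := by
    intro x
    rw [Real.log_div (ne_of_gt (hpos x)) (by positivity)]
  have hlog : Tendsto (fun x : ℝ => Real.log (((x-p)^2+q^2)/(x^2+1))) atTop (nhds 0) := by
    have := ((Real.continuousAt_log one_ne_zero).tendsto).comp (ratio_tendsto_top p q)
    simpa [Real.log_one, Function.comp_def] using this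
  simp only [h1]
  simpa using hlog.const_mul (1/2 : ℝ)

lemma log_part_tendsto_bot (p q : ℝ) (hq : q ≠ 0) :
    Tendsto (fun x : ℝ => (1/2) * (Real.log ((x-p)^2+q^2) - Real.log (x^2+1)))
      atBot (nhds 0) := by
  have hpos : ∀ x : ℝ, (0:ℝ) < (x-p)^2+q^2 := fun x => by positivity
  have h1 : ∀ x : ℝ, Real.log ((x-p)^2+q^2) - Real.log (x^2+1)
      = Real.log (((x-p)^2+q^2)/(x^2+1)) := by
    intro x
    rw [Real.log_div (ne_of_gt (hpos x)) (by positivity)]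
  have hlog : Tendsto (fun x : ℝ => Real.log (((x-p)^2+q^2)/(x^2+1))) atBot (nhds 0) := by
    have := ((Real.continuousAt_log one_ne_zero).tendsto).comp (ratio_tendsto_bot p q)
    simpa [Real.log_one, Function.comp_def] using this
  simp only [h1]
  simpa using hlog.const_mul (1/2 : ℝ)

lemma arctan_part_tendsto_top (p q : ℝ) (hq : 0 < q) :
    Tendsto (fun x : ℝ => Real.arctan ((x-p)/q)) atTop (nhds (π/2)) := by
  have hin : Tendsto (fun x : ℝ => (x-p)/q) atTop atTop := by
    apply Tendsto.atTop_div_const hq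
    simpa [sub_eq_add_neg] using tendsto_atTop_add_const_right atTop (-p) tendsto_id
  exact (Real.tendsto_arctan_atTop.mono_right nhdsWithin_le_nhds).comp hin

lemma arctan_part_tendsto_bot (p q : ℝ) (hq : 0 < q) :
    Tendsto (fun x : ℝ => Real.arctan ((x-p)/q)) atBot (nhds (-(π/2))) := by
  have hin : Tendsto (fun x : ℝ => (x-p)/q) atBot atBot := by
    apply Tendsto.atBot_div_const hq
    simpa [sub_eq_add_neg] using tendsto_atBot_add_const_right atBot (-p) tendsto_id
  exact (Real.tendsto_arctan_atBot.mono_right nhdsWithin_le_nhds).comp hin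

lemma him {n : ℕ} (a γ : Fin n → ℂ) (x : ℝ) (j : Fin n) (hq : (a j).im ≠ 0) :
    (γ j / ((x:ℂ) - a j)).im
      = ((γ j).im * (x-(a j).re) + (γ j).re * (a j).im) / ((x-(a j).re)^2+(a j).im^2) := by
  rw [Complex.div_im]
  have hns : Complex.normSq ((x:ℂ) - a j) = (x-(a j).re)^2+(a j).im^2 := by
    simp [Complex.normSq_apply, Complex.sub_re, Complex.sub_im]
    ring
  rw [hns]
  simp [Complex.sub_re, Complex.sub_im]
  ring

lemma atom_deriv {n : ℕ} (a γ : Fin n → ℂ) (ha : ∀ j, 0 < (a j).im) (x : ℝ) :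
    HasDerivAt (fun y : ℝ => (1/π) * ∑ j,
        ((γ j).im * ((1/2) * (Real.log ((y-(a j).re)^2+(a j).im^2) - Real.log (y^2+1)))
          + (γ j).re * Real.arctan ((y-(a j).re)/(a j).im)))
      ((1/π) * ∑ j, ((γ j).im * ((x-(a j).re)/((x-(a j).re)^2+(a j).im^2) - x/(x^2+1))
          + (γ j).re * ((a j).im/((x-(a j).re)^2+(a j).im^2)))) x := by
  apply HasDerivAt.const_mul
  apply HasDerivAt.fun_sum
  intro j _
  set p := (a j).re
  set q := (a j).im
  have hq : 0 < q := ha j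
  have hpos : (0:ℝ) < (x-p)^2+q^2 := by positivity
  have h_sq : HasDerivAt (fun y : ℝ => (y-p)^2+q^2) (2*(x-p)) x := by
    have := (((hasDerivAt_id x).sub_const p).pow 2).add_const (q^2)
    simpa using this
  have hlog1 : HasDerivAt (fun y : ℝ => Real.log ((y-p)^2+q^2))
      (2*(x-p)/((x-p)^2+q^2)) x := h_sq.log (ne_of_gt hpos)
  have h_sq2 : HasDerivAt (fun y : ℝ => y^2+1) (2*x) x := by
    have := ((hasDerivAt_id x).pow 2).add_const (1:ℝ)
    simpa using this
  have hlog2 : HasDerivAt (fun y : ℝ => Real.log (y^2+1)) (2*x/(x^2+1)) x :=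
    h_sq2.log (by positivity)
  have harct : HasDerivAt (fun y : ℝ => Real.arctan ((y-p)/q))
      ((1/(1+((x-p)/q)^2)) * (1/q)) x := by
    have hin : HasDerivAt (fun y : ℝ => (y-p)/q) (1/q) x := by
      have := ((hasDerivAt_id x).sub_const p).div_const q
      simpa using this
    exact (Real.hasDerivAt_arctan ((x-p)/q)).comp x hin
  have hcomb := ((hlog1.fun_sub hlog2).const_mul ((1/2:ℝ))).const_mul ((γ j).im) |>.fun_add
    (harct.const_mul ((γ j).re))
  convert hcomb using 1
  have hq0 : q ≠ 0 := ne_of_gt hq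
  field_simp
  ring

lemma atom_integral {n : ℕ} (a γ : Fin n → ℂ) (ha : ∀ j, 0 < (a j).im)
    (hs : (∑ j, γ j).im = 0)
    (hint : Integrable (fun x : ℝ => (∑ j, γ j / ((x:ℂ) - a j)).im / π)) :
    ∫ x : ℝ, (∑ j, γ j / ((x:ℂ) - a j)).im / π = (∑ j, γ j).re := by
  set F : ℝ → ℝ := fun x => (∑ j, γ j / ((x:ℂ) - a j)).im / π with hF
  set G : ℝ → ℝ := fun y => (1/π) * ∑ j,
      ((γ j).im * ((1/2) * (Real.log ((y-(a j).re)^2+(a j).im^2) - Real.log (y^2+1)))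
        + (γ j).re * Real.arctan ((y-(a j).re)/(a j).im)) with hGdef
  have hsum0 : ∑ j, (γ j).im = 0 := by rw [← Complex.im_sum]; exact hs
  have hFd : ∀ x : ℝ, (1/π) * ∑ j, ((γ j).im * ((x-(a j).re)/((x-(a j).re)^2+(a j).im^2)
      - x/(x^2+1)) + (γ j).re * ((a j).im/((x-(a j).re)^2+(a j).im^2))) = F x := by
    intro x
    have hterm : ∀ j, ((γ j).im * ((x-(a j).re)/((x-(a j).re)^2+(a j).im^2) - x/(x^2+1))
        + (γ j).re * ((a j).im/((x-(a j).re)^2+(a j).im^2)))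
        = (γ j / ((x:ℂ) - a j)).im - (γ j).im * (x/(x^2+1)) := by
      intro j
      rw [him a γ x j (ne_of_gt (ha j))]
      ring
    rw [Finset.sum_congr rfl (fun j _ => hterm j), Finset.sum_sub_distrib,
      ← Finset.sum_mul, hsum0, zero_mul, sub_zero, hF]
    rw [← Complex.im_sum]
    ring
  have hG : ∀ x : ℝ, HasDerivAt G (F x) x := by
    intro x
    have := atom_deriv a γ ha x
    rwa [hFd x] at this
  have hTop : Tendsto G atTop (nhds ((1/π) * ∑ j, (γ j).re * (π/2))) := by
    apply Tendsto.const_mul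
    apply tendsto_finset_sum
    intro j _
    have h1 := (log_part_tendsto_top (a j).re (a j).im (ne_of_gt (ha j))).const_mul ((γ j).im)
    have h2 := (arctan_part_tendsto_top (a j).re (a j).im (ha j)).const_mul ((γ j).re)
    have := h1.add h2
    simpa using this
  have hBot : Tendsto G atBot (nhds ((1/π) * ∑ j, (γ j).re * (-(π/2)))) := by
    apply Tendsto.const_mul
    apply tendsto_finset_sum
    intro j _
    have h1 := (log_part_tendsto_bot (a j).re (a j).im (ne_of_gt (ha j))).const_mul ((γ j).im)
    have h2 := (arctan_part_tendsto_bot (a j).re (a j).im (ha j)).const_mul ((γ j).re)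
    have := h1.add h2
    simpa using this
  have key : ∀ T : ℝ, ∫ x in (-T)..T, F x = G T - G (-T) := fun T =>
    intervalIntegral.integral_eq_sub_of_hasDerivAt (fun x _ => hG x) hint.intervalIntegrable
  have h2 : Tendsto (fun T : ℝ => ∫ x in (-T)..T, F x) atTop (nhds (∫ x : ℝ, F x)) :=
    intervalIntegral_tendsto_integral hint tendsto_neg_atTop_atBot tendsto_id
  have h3 : Tendsto (fun T : ℝ => G T - G (-T)) atTop
      (nhds ((1/π) * ∑ j, (γ j).re * (π/2) - (1/π) * ∑ j, (γ j).re * (-(π/2)))) :=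
    hTop.sub (hBot.comp tendsto_neg_atTop_atBot)
  have h4 : Tendsto (fun T : ℝ => ∫ x in (-T)..T, F x) atTop
      (nhds ((1/π) * ∑ j, (γ j).re * (π/2) - (1/π) * ∑ j, (γ j).re * (-(π/2)))) := by
    refine h3.congr fun T => (key T).symm
  have h5 := tendsto_nhds_unique h2 h4
  rw [h5, Complex.re_sum]
  simp only [mul_neg, Finset.sum_neg_distrib]
  rw [← Finset.sum_mul]
  field_simp
  ring

end Aux


set_option maxHeartbeats 1600000 in
/-- Given `m ≥ 1` and distinct poles `a₁,…,a_m` in the open upper half-plane,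
the Vandermonde system `Σ_j α_j a_j^k = δ_{k,0}` (`k = 0,…,m−1`) has a unique
solution `α`, and with `b_j = conj a_j`, `β_j = conj α_j` the resulting rational
kernel is real-valued on `ℝ` and is an `m`th order kernel. -/
theorem stmt_10 (m : ℕ) (hm : 1 ≤ m) (a : Fin m → ℂ)
    (ha : Function.Injective a) (haU : ∀ j, 0 < (a j).im) :
    ∃ α : Fin m → ℂ,
      ((∑ j, α j) = 1 ∧ ∀ k : ℕ, 1 ≤ k → k < m → (∑ j, α j * a j ^ k) = 0) ∧
      (∀ α' : Fin m → ℂ,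
        ((∑ j, α' j) = 1 ∧ ∀ k : ℕ, 1 ≤ k → k < m → (∑ j, α' j * a j ^ k) = 0) →
        α' = α) ∧
      (∀ x : ℝ,
        (ratKernel a (fun j => starRingEnd ℂ (a j)) α (fun j => starRingEnd ℂ (α j)) x).im
          = 0) ∧
      Integrable (fun x : ℝ =>
        (ratKernel a (fun j => starRingEnd ℂ (a j)) α (fun j => starRingEnd ℂ (α j)) x).re) ∧
      (∫ x : ℝ,
        (ratKernel a (fun j => starRingEnd ℂ (a j)) α (fun j => starRingEnd ℂ (α j)) x).re)
        = 1 ∧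
      (∀ j : ℕ, 0 < j → j < m →
        Integrable (fun x : ℝ =>
          (ratKernel a (fun i => starRingEnd ℂ (a i)) α (fun i => starRingEnd ℂ (α i)) x).re
            * x ^ j) ∧
        (∫ x : ℝ,
          (ratKernel a (fun i => starRingEnd ℂ (a i)) α (fun i => starRingEnd ℂ (α i)) x).re
            * x ^ j) = 0) ∧
      ∃ CK > (0 : ℝ), ∀ x : ℝ,
        |(ratKernel a (fun j => starRingEnd ℂ (a j)) α (fun j => starRingEnd ℂ (α j)) x).re|
          ≤ CK / (1 + |x|) ^ (m + 1) := by
  haveI : NeZero m := ⟨by omega⟩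
  classical
  -- Vandermonde system
  obtain ⟨α, hPa, huniq⟩ : ∃ α : Fin m → ℂ,
      ((∑ j, α j) = 1 ∧ ∀ k : ℕ, 1 ≤ k → k < m → (∑ j, α j * a j ^ k) = 0) ∧
      (∀ α' : Fin m → ℂ,
        ((∑ j, α' j) = 1 ∧ ∀ k : ℕ, 1 ≤ k → k < m → (∑ j, α' j * a j ^ k) = 0) → α' = α) := by
    set Mv : Matrix (Fin m) (Fin m) ℂ := Matrix.of (fun k j => a j ^ (k : ℕ)) with hMv
    have hdet : Mv.det ≠ 0 := by
      have hT : Mv = (Matrix.vandermonde a).transpose := by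
        ext k j
        simp [hMv, Matrix.vandermonde, Matrix.transpose_apply]
      rw [hT, Matrix.det_transpose]
      exact Matrix.det_vandermonde_ne_zero_iff.mpr ha
    have hunit : IsUnit Mv.det := isUnit_iff_ne_zero.mpr hdet
    set e : Fin m → ℂ := Pi.single 0 1 with he
    have hPiff : ∀ α' : Fin m → ℂ, Mv.mulVec α' = e ↔
        ((∑ j, α' j) = 1 ∧ ∀ k : ℕ, 1 ≤ k → k < m → (∑ j, α' j * a j ^ k) = 0) := by
      intro α'
      constructor
      · intro h
        constructor
        · have h0 := congrFun h 0
          simp [Matrix.mulVec, dotProduct, hMv, he, Pi.single_eq_same] at h0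
          simpa using h0
        · intro k hk1 hk2
          have hk := congrFun h ⟨k, hk2⟩
          have hne : (⟨k, hk2⟩ : Fin m) ≠ 0 := by
            simp [Fin.ext_iff]; omega
          simp [Matrix.mulVec, dotProduct, hMv, he, Pi.single_eq_of_ne hne] at hk
          rw [← hk]
          apply Finset.sum_congr rfl
          intro j _
          ring
      · rintro ⟨h1, h2⟩
        funext k
        by_cases hk : k = 0
        · subst hk
          simp [Matrix.mulVec, dotProduct, hMv, he, Pi.single_eq_same]
          simpa using h1
        · have hk1 : 1 ≤ (k : ℕ) := by
            rcases Nat.eq_zero_or_pos (k:ℕ) with h | h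
            · exact absurd (Fin.ext h) hk
            · exact h
          have := h2 (k : ℕ) hk1 k.isLt
          simp [Matrix.mulVec, dotProduct, hMv, he, Pi.single_eq_of_ne hk]
          rw [← this]
          apply Finset.sum_congr rfl
          intro j _
          ring
    refine ⟨Mv⁻¹.mulVec e, ?_, ?_⟩
    · rw [show (((∑ j, (Mv⁻¹.mulVec e) j) = 1 ∧ ∀ k : ℕ, 1 ≤ k → k < m →
          (∑ j, (Mv⁻¹.mulVec e) j * a j ^ k) = 0)) = ((∑ j, (Mv⁻¹.mulVec e) j) = 1 ∧
          ∀ k : ℕ, 1 ≤ k → k < m → (∑ j, (Mv⁻¹.mulVec e) j * a j ^ k) = 0) from rfl,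
        ← hPiff, Matrix.mulVec_mulVec, Matrix.mul_nonsing_inv _ hunit, Matrix.one_mulVec]
    · intro α' h
      rw [← hPiff] at h
      rw [← h, Matrix.mulVec_mulVec, Matrix.nonsing_inv_mul _ hunit, Matrix.one_mulVec]
  -- basic facts
  have ha' : ∀ j, (a j).im ≠ 0 := fun j => ne_of_gt (haU j)
  have hb' : ∀ j, ((fun j => starRingEnd ℂ (a j)) j).im ≠ 0 := by
    intro j
    simp only [Complex.conj_im]
    exact neg_ne_zero.mpr (ha' j)
  have hmom : ∀ l, l < m → ∑ j, α j * a j ^ l = if l = 0 then 1 else 0 := by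
    intro l hl
    by_cases h0 : l = 0
    · subst h0
      rw [if_pos rfl]
      simpa using hPa.1
    · rw [if_neg h0]
      exact hPa.2 l (by omega) hl
  have hmomb : ∀ l, l < m →
      ∑ j, (starRingEnd ℂ) (α j) * ((starRingEnd ℂ) (a j)) ^ l = if l = 0 then 1 else 0 := by
    intro l hl
    have hco : ∑ j, (starRingEnd ℂ) (α j) * ((starRingEnd ℂ) (a j)) ^ l
        = (starRingEnd ℂ) (∑ j, α j * a j ^ l) := by
      rw [map_sum]
      congr 1 with j
      rw [_root_.map_mul, _root_.map_pow]
    rw [hco, hmom l hl]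
    split <;> simp
  have hre : ∀ x : ℝ,
      (ratKernel a (fun j => starRingEnd ℂ (a j)) α (fun j => starRingEnd ℂ (α j)) x).re
        = (∑ j, α j / ((x:ℂ) - a j)).im / π := by
    intro x
    rw [ratKernel_eq a α x]
    exact Complex.ofReal_re _
  -- continuity
  have hcontK : Continuous
      (fun x : ℝ => ratKernel a (fun j => starRingEnd ℂ (a j)) α (fun j => starRingEnd ℂ (α j)) x) := by
    unfold ratKernel
    exact continuous_const.mul ((contS a α ha').sub (contS _ _ hb'))
  have hcontKre : Continuous (fun x : ℝ =>
      (ratKernel a (fun j => starRingEnd ℂ (a j)) α (fun j => starRingEnd ℂ (α j)) x).re) :=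
    Complex.continuous_re.comp hcontK
  -- constants
  set M : ℝ := 1 + ∑ j, ‖a j‖ with hMdef
  have hM1 : 1 ≤ M := by
    have : (0:ℝ) ≤ ∑ j, ‖a j‖ := Finset.sum_nonneg fun j _ => norm_nonneg _
    simp only [hMdef]; linarith
  have hMa : ∀ j, ‖a j‖ ≤ M := by
    intro j
    have := Finset.single_le_sum (f := fun j => ‖a j‖) (fun i _ => norm_nonneg _) (Finset.mem_univ j)
    simp only [hMdef]; linarith
  have hMb : ∀ j, ‖(fun j => starRingEnd ℂ (a j)) j‖ ≤ M := by
    intro j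
    simpa [RCLike.norm_conj] using hMa j
  clear_value M
  set A : ℝ := ∑ j, ‖α j‖ with hAdef
  have hA0 : 0 ≤ A := Finset.sum_nonneg fun j _ => norm_nonneg _
  have hAb : ∑ j, ‖(fun j => starRingEnd ℂ (α j)) j‖ = A := by
    simp [hAdef, RCLike.norm_conj]
  clear_value A
  have hnormc : ‖(1 / (2 * (Real.pi:ℂ) * Complex.I) : ℂ)‖ = 1/(2*π) := by
    simp [map_div₀, map_mul, Complex.norm_I, Complex.norm_real,
      abs_of_pos Real.pi_pos]
  -- tail bound
  have htail : ∀ x : ℝ, 2*M+1 ≤ |x| →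
      ‖ratKernel a (fun j => starRingEnd ℂ (a j)) α (fun j => starRingEnd ℂ (α j)) x‖
        ≤ (A * M^m * 2^(m+1) / π) / (1+|x|)^(m+1) := by
    intro x hx
    have h1 := tail m hm a α ha' hmom M hM1 hMa x hx
    have h2 := tail m hm _ _ hb' hmomb M hM1 hMb x hx
    rw [hAb] at h2
    rw [← hAdef] at h1
    have h1x : (0:ℝ) < (1+|x|)^(m+1) := by positivity
    unfold ratKernel
    rw [norm_mul, hnormc]
    have hsplit : (∑ j, α j / ((x:ℂ) - a j))
          - ∑ j, (starRingEnd ℂ) (α j) / ((x:ℂ) - (starRingEnd ℂ) (a j))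
        = ((∑ j, α j / ((x:ℂ) - a j)) - 1/(x:ℂ))
          - ((∑ j, (starRingEnd ℂ) (α j) / ((x:ℂ) - (starRingEnd ℂ) (a j))) - 1/(x:ℂ)) := by
      ring
    rw [hsplit]
    have h3 : ‖((∑ j, α j / ((x:ℂ) - a j)) - 1/(x:ℂ))
          - ((∑ j, (starRingEnd ℂ) (α j) / ((x:ℂ) - (starRingEnd ℂ) (a j))) - 1/(x:ℂ))‖
        ≤ 2 * (A * M^m * 2^(m+1) / (1+|x|)^(m+1)) := by
      refine le_trans (norm_sub_le _ _) ?_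
      linarith
    calc (1/(2*π)) * ‖((∑ j, α j / ((x:ℂ) - a j)) - 1/(x:ℂ))
          - ((∑ j, (starRingEnd ℂ) (α j) / ((x:ℂ) - (starRingEnd ℂ) (a j))) - 1/(x:ℂ))‖
        ≤ (1/(2*π)) * (2 * (A * M^m * 2^(m+1) / (1+|x|)^(m+1))) := by
          apply mul_le_mul_of_nonneg_left h3
          positivity
      _ = (A * M^m * 2^(m+1) / π) / (1+|x|)^(m+1) := by
          field_simp
  -- compact bound
  obtain ⟨B₀, hB₀⟩ := (isCompact_Icc (a := -(2*M+1)) (b := 2*M+1)).exists_bound_of_continuousOn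
    hcontK.continuousOn
  set B : ℝ := max B₀ 0 with hBdef
  have hB0 : 0 ≤ B := le_max_right _ _
  have hBall : ∀ x : ℝ, |x| ≤ 2*M+1 →
      ‖ratKernel a (fun j => starRingEnd ℂ (a j)) α (fun j => starRingEnd ℂ (α j)) x‖ ≤ B := by
    intro x hx
    refine le_trans (hB₀ x ?_) (le_max_left _ _)
    exact Set.mem_Icc.mpr (abs_le.mp hx)
  clear_value B
  set C : ℝ := B * (1+(2*M+1))^(m+1) + A*M^m*2^(m+1)/π + 1 with hCdef
  have hBP : 0 ≤ B * (1+(2*M+1))^(m+1) :=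
    mul_nonneg hB0 (pow_nonneg (by linarith) _)
  have hAP : 0 ≤ A*M^m*2^(m+1)/π :=
    div_nonneg (mul_nonneg (mul_nonneg hA0 (pow_nonneg (by linarith) m))
      (pow_nonneg (by norm_num) _)) (le_of_lt Real.pi_pos)
  have hC0 : 0 < C := by
    simp only [hCdef]; linarith
  clear_value C
  have hK : ∀ x : ℝ,
      ‖ratKernel a (fun j => starRingEnd ℂ (a j)) α (fun j => starRingEnd ℂ (α j)) x‖
        ≤ C / (1+|x|)^(m+1) := by
    intro x
    have h1x : (0:ℝ) < 1+|x| := by positivity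
    by_cases hx : 2*M+1 ≤ |x|
    · refine le_trans (htail x hx) ?_
      have hnum : A*M^m*2^(m+1)/π ≤ C := by
        simp only [hCdef]; linarith
      exact div_le_div_of_nonneg_right hnum (by positivity)
    · push_neg at hx
      have h2 := hBall x (le_of_lt hx)
      have h3 : (1+|x|)^(m+1) ≤ (1+(2*M+1))^(m+1) := by
        apply pow_le_pow_left₀ (by positivity)
        linarith
      rw [le_div_iff₀ (by positivity)]
      calc ‖ratKernel a (fun j => starRingEnd ℂ (a j)) α (fun j => starRingEnd ℂ (α j)) x‖
            * (1+|x|)^(m+1)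
          ≤ B * (1+(2*M+1))^(m+1) := mul_le_mul h2 h3 (by positivity) hB0
        _ ≤ C := by
            simp only [hCdef]; linarith
  have habs : ∀ x : ℝ,
      |(ratKernel a (fun j => starRingEnd ℂ (a j)) α (fun j => starRingEnd ℂ (α j)) x).re|
        ≤ C / (1+|x|)^(m+1) := fun x => le_trans (Complex.abs_re_le_norm _) (hK x)
  -- integrability
  have hmaj : Integrable (fun x : ℝ => C * (1+x^2)⁻¹) := integrable_inv_one_add_sq.const_mul C
  have hpow2 : ∀ (x : ℝ) (l : ℕ), 2 ≤ l → 1+x^2 ≤ (1+|x|)^l := by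
    intro x l hl
    have h2 : 1+x^2 ≤ (1+|x|)^2 := by nlinarith [abs_nonneg x, sq_abs x]
    calc 1+x^2 ≤ (1+|x|)^2 := h2
      _ ≤ (1+|x|)^l := pow_le_pow_right₀ (by linarith [abs_nonneg x]) hl
  have hint0 : Integrable (fun x : ℝ =>
      (ratKernel a (fun j => starRingEnd ℂ (a j)) α (fun j => starRingEnd ℂ (α j)) x).re) := by
    refine hmaj.mono' hcontKre.aestronglyMeasurable ?_
    filter_upwards with x
    rw [Real.norm_eq_abs]
    refine le_trans (habs x) ?_
    rw [← div_eq_mul_inv]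
    exact div_le_div_of_nonneg_left hC0.le (by positivity) (hpow2 x (m+1) (by omega))
  have hintk : ∀ k : ℕ, 1 ≤ k → k < m → Integrable (fun x : ℝ =>
      (ratKernel a (fun j => starRingEnd ℂ (a j)) α (fun j => starRingEnd ℂ (α j)) x).re
        * x^k) := by
    intro k hk1 hk2
    refine hmaj.mono' ((hcontKre.mul (continuous_pow k)).aestronglyMeasurable) ?_
    filter_upwards with x
    rw [Real.norm_eq_abs, abs_mul, abs_pow]
    have h1 := habs x
    have h1x : (0:ℝ) < 1+|x| := by positivity
    have hxk : |x|^k ≤ (1+|x|)^k := pow_le_pow_left₀ (abs_nonneg x) (by linarith) k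
    have hmid : |(ratKernel a (fun j => starRingEnd ℂ (a j)) α (fun j => starRingEnd ℂ (α j)) x).re|
          * |x|^k ≤ (C/(1+|x|)^(m+1)) * (1+|x|)^k :=
      mul_le_mul h1 hxk (pow_nonneg (abs_nonneg x) k)
        (div_nonneg hC0.le (by positivity))
    have hsplit : (1+|x|)^(m+1) = (1+|x|)^(m+1-k) * (1+|x|)^k := by
      rw [← pow_add]; congr 1; omega
    have heq2 : (C/(1+|x|)^(m+1)) * (1+|x|)^k = C/(1+|x|)^(m+1-k) := by
      rw [hsplit]
      field_simp
    refine le_trans hmid ?_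
    rw [heq2, ← div_eq_mul_inv]
    exact div_le_div_of_nonneg_left hC0.le (by positivity) (hpow2 x (m+1-k) (by omega))
  have hpt : ∀ k : ℕ, 1 ≤ k → k < m → ∀ x : ℝ,
      (ratKernel a (fun j => starRingEnd ℂ (a j)) α (fun j => starRingEnd ℂ (α j)) x).re * x^k
        = (∑ j, (α j * a j ^ k) / ((x:ℂ) - a j)).im / π := by
    intro k hk1 hk2 x
    rw [hre x]
    have h := shift m a α ha' hmom k hk1 (le_of_lt hk2) x
    have hL : (((x:ℂ))^k * (∑ j, α j / ((x:ℂ) - a j))).im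
        = x^k * (∑ j, α j / ((x:ℂ) - a j)).im := by
      simp [← Complex.ofReal_pow, Complex.mul_im, Complex.ofReal_re, Complex.ofReal_im,
        Complex.im_sum]
    have hR : (((x:ℂ))^(k-1) + ∑ j, (α j * a j ^ k) / ((x:ℂ) - a j)).im
        = (∑ j, (α j * a j ^ k) / ((x:ℂ) - a j)).im := by
      rw [Complex.add_im, show ((x:ℂ))^(k-1) = (((x^(k-1) : ℝ)) : ℂ) by push_cast; ring,
        Complex.ofReal_im, zero_add]
    have h2 : x^k * (∑ j, α j / ((x:ℂ) - a j)).im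
        = (∑ j, (α j * a j ^ k) / ((x:ℂ) - a j)).im := by
      rw [← hL, h, hR]
    rw [div_mul_eq_mul_div, mul_comm, h2]
  refine ⟨α, hPa, huniq, ?_, hint0, ?_, ?_, ⟨C, hC0, habs⟩⟩
  · intro x
    rw [ratKernel_eq a α x]
    exact Complex.ofReal_im _
  · have hintF : Integrable (fun x : ℝ => (∑ j, α j / ((x:ℂ) - a j)).im / π) :=
      hint0.congr (Filter.Eventually.of_forall hre)
    calc (∫ x : ℝ,
          (ratKernel a (fun j => starRingEnd ℂ (a j)) α (fun j => starRingEnd ℂ (α j)) x).re)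
        = ∫ x : ℝ, (∑ j, α j / ((x:ℂ) - a j)).im / π := by
          apply integral_congr_ae
          filter_upwards with x
          exact hre x
      _ = (∑ j, α j).re := atom_integral a α haU (by rw [hPa.1]; simp) hintF
      _ = 1 := by rw [hPa.1]; simp
  · intro k hk1 hk2
    have hintk' := hintk k hk1 hk2
    refine ⟨hintk', ?_⟩
    have hintF : Integrable (fun x : ℝ => (∑ j, (α j * a j ^ k) / ((x:ℂ) - a j)).im / π) :=
      hintk'.congr (Filter.Eventually.of_forall (hpt k hk1 hk2))
    have hs' : (∑ j, α j * a j ^ k).im = 0 := by rw [hPa.2 k hk1 hk2]; simp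
    calc (∫ x : ℝ,
          (ratKernel a (fun i => starRingEnd ℂ (a i)) α (fun i => starRingEnd ℂ (α i)) x).re
            * x ^ k)
        = ∫ x : ℝ, (∑ j, (α j * a j ^ k) / ((x:ℂ) - a j)).im / π := by
          apply integral_congr_ae
          filter_upwards with x
          exact hpt k hk1 hk2 x
      _ = (∑ j, α j * a j ^ k).re := atom_integral a _ haU hs' hintF
      _ = 0 := by rw [hPa.2 k hk1 hk2]; simp
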